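/- Let L = J(P) be a finite distributive lattice and suppose every linear extension of P has at most one descent. Then P has no antichain of size 3. -/

import Mathlib

open scoped Classical

/-- `π` is a linear extension of the (strict, compatibly labeled) partial order `r`
on `{ξ_1, …, ξ_d}`: whenever `ξ_{π a} < ξ_{π b}` in the poset, `a < b`. -/
def IsLinExt {d : ℕ} (r : Fin d → Fin d → Prop) (π : Equiv.Perm (Fin d)) : Prop :=
  ∀ a b : Fin d, r (π a) (π b) → a < b

/-- The number of descents of the permutation `π = π 0, π 1, …, π (d-1)`:
positions `j` with `π j > π (j+1)`. -/
noncomputable def descents {d : ℕ} (π : Equiv.Perm (Fin d)) : ℕ :=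
  (Finset.univ.filter fun j : Fin d =>
    ∃ hj : (j : ℕ) + 1 < d, π ⟨(j : ℕ) + 1, hj⟩ < π j).card

/-- `A` is an antichain (clutter) of the strict order `r`. -/
def IsAntichain' {d : ℕ} (r : Fin d → Fin d → Prop) (A : Finset (Fin d)) : Prop :=
  ∀ a ∈ A, ∀ b ∈ A, a ≠ b → ¬ r a b ∧ ¬ r b a

/-- `S` is a maximal chain of the strict order `r`. -/
def IsMaxChain' {d : ℕ} (r : Fin d → Fin d → Prop) (S : Set (Fin d)) : Prop :=
  (∀ a ∈ S, ∀ b ∈ S, a ≠ b → r a b ∨ r b a) ∧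
  ∀ T : Set (Fin d), (∀ a ∈ T, ∀ b ∈ T, a ≠ b → r a b ∨ r b a) → S ⊆ T → S = T

/-- The poset is pure: all maximal chains have the same cardinality. -/
def IsPure' {d : ℕ} (r : Fin d → Fin d → Prop) : Prop :=
  ∀ S T : Set (Fin d), IsMaxChain' r S → IsMaxChain' r T → S.ncard = T.ncard

/-- No element is comparable to all other elements (the lattice `J(P)` is simple). -/
def IsSimple' {d : ℕ} (r : Fin d → Fin d → Prop) : Prop :=
  ∀ x : Fin d, ∃ y : Fin d, y ≠ x ∧ ¬ r x y ∧ ¬ r y x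

lemma sorted_idxOf_lt {d : ℕ} {l : List (Fin d)} (hs : l.SortedLT) {u v : Fin d}
    (hu : u ∈ l) (hv : v ∈ l) (huv : u < v) : l.idxOf u < l.idxOf v := by
  by_contra h
  push_neg at h
  have hiu := List.idxOf_lt_length_iff.2 hu
  have hiv := List.idxOf_lt_length_iff.2 hv
  rcases eq_or_lt_of_le h with heq | hlt
  · exact ne_of_lt huv ((List.idxOf_inj hu).1 heq.symm)
  · have := hs.strictMono_get (a := ⟨l.idxOf v, hiv⟩) (b := ⟨l.idxOf u, hiu⟩) hlt
    simp only [List.get_eq_getElem, List.getElem_idxOf] at this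
    exact absurd huv (lt_asymm this)


set_option maxHeartbeats 1000000 in
/-- If every linear extension of the finite poset `P` has at most one descent, then
`P` has no antichain of size three. -/
theorem stmt_13 {d : ℕ} (r : Fin d → Fin d → Prop)
    (htrans : ∀ a b c : Fin d, r a b → r b c → r a c)
    (hcompat : ∀ a b : Fin d, r a b → a < b)
    (hext : ∀ π : Equiv.Perm (Fin d), IsLinExt r π → descents π ≤ 1) :
    ∀ A : Finset (Fin d), IsAntichain' r A → A.card ≤ 2 := by
  intro A hA
  by_contra hcard
  push_neg at hcard
  obtain ⟨B, hBA, hB3⟩ := Finset.exists_subset_card_eq hcard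
  obtain ⟨x, y, z, hxy, hyz, hxA, hyA, hzA⟩ :
      ∃ x y z : Fin d, x < y ∧ y < z ∧ x ∈ A ∧ y ∈ A ∧ z ∈ A := by
    refine ⟨B.orderIsoOfFin hB3 0, B.orderIsoOfFin hB3 1, B.orderIsoOfFin hB3 2,
      (B.orderIsoOfFin hB3).strictMono (by decide),
      (B.orderIsoOfFin hB3).strictMono (by decide), ?_, ?_, ?_⟩
    exacts [hBA (B.orderIsoOfFin hB3 0).2, hBA (B.orderIsoOfFin hB3 1).2,
      hBA (B.orderIsoOfFin hB3 2).2]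
  have hirr : ∀ a : Fin d, ¬ r a a := fun a ha => lt_irrefl a (hcompat a a ha)
  have hixy := hA x hxA y hyA (ne_of_lt hxy)
  have hiyz := hA y hyA z hzA (ne_of_lt hyz)
  have hixz := hA x hxA z hzA (ne_of_lt (hxy.trans hyz))
  -- blocks
  set U : Finset (Fin d) := Finset.univ.filter (fun u => r x u ∨ r y u ∨ r z u) with hUdef
  set W : Finset (Fin d) :=
    Finset.univ.filter (fun u => ¬(r x u ∨ r y u ∨ r z u) ∧ u ≠ x ∧ u ≠ y ∧ u ≠ z) with hWdef
  have hxU : x ∉ U := by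
    simp only [hUdef, Finset.mem_filter, Finset.mem_univ, true_and]
    rintro (h | h | h)
    exacts [hirr x h, hixy.2 h, hixz.2 h]
  have hyU : y ∉ U := by
    simp only [hUdef, Finset.mem_filter, Finset.mem_univ, true_and]
    rintro (h | h | h)
    exacts [hixy.1 h, hirr y h, hiyz.2 h]
  have hzU : z ∉ U := by
    simp only [hUdef, Finset.mem_filter, Finset.mem_univ, true_and]
    rintro (h | h | h)
    exacts [hixz.1 h, hiyz.1 h, hirr z h]
  have hxW : x ∉ W := by simp [hWdef]
  have hyW : y ∉ W := by simp [hWdef]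
  have hzW : z ∉ W := by simp [hWdef]
  have hUW : ∀ u, u ∈ U → u ∉ W := by
    intro u hu hw
    simp only [hUdef, Finset.mem_filter, Finset.mem_univ, true_and] at hu
    simp only [hWdef, Finset.mem_filter, Finset.mem_univ, true_and] at hw
    exact hw.1 hu
  set lA : List (Fin d) := W.sort (· ≤ ·) with hlA
  set lB : List (Fin d) := U.sort (· ≤ ·) with hlB
  set l : List (Fin d) := lA ++ z :: y :: x :: lB with hl
  have hmemA : ∀ u, u ∈ lA ↔ u ∈ W := fun u => Finset.mem_sort _
  have hmemB : ∀ u, u ∈ lB ↔ u ∈ U := fun u => Finset.mem_sort _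
  have hndB : (z :: y :: x :: lB).Nodup := by
    simp only [List.nodup_cons, List.mem_cons, hmemB]
    push_neg
    exact ⟨⟨(ne_of_lt hyz).symm, (ne_of_lt (hxy.trans hyz)).symm, hzU⟩,
      ⟨(ne_of_lt hxy).symm, hyU⟩, hxU, Finset.sort_nodup _ _⟩
  have hnd : l.Nodup := by
    rw [hl, List.nodup_append]
    refine ⟨Finset.sort_nodup _ _, hndB, ?_⟩
    intro u hu v hv huv
    subst huv
    rw [hmemA] at hu
    simp only [List.mem_cons, hmemB] at hv
    rcases hv with rfl | rfl | rfl | hv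
    exacts [hzW hu, hyW hu, hxW hu, hUW u hv hu]
  have hmem : ∀ u : Fin d, u ∈ l := by
    intro u
    rw [hl, List.mem_append, List.mem_cons, List.mem_cons, List.mem_cons, hmemA, hmemB]
    by_cases h1 : r x u ∨ r y u ∨ r z u
    · right; right; right; right
      simp only [hUdef, Finset.mem_filter, Finset.mem_univ, true_and]; exact h1
    · by_cases h2 : u = x ∨ u = y ∨ u = z
      · rcases h2 with rfl | rfl | rfl <;> tauto
      · push_neg at h2
        left
        simp only [hWdef, Finset.mem_filter, Finset.mem_univ, true_and]
        exact ⟨h1, h2⟩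
  set e := List.Nodup.getEquivOfForallMemList l hnd hmem with he
  have hlen : l.length = d := by
    have := Fintype.card_congr e
    simpa using this
  set π : Equiv.Perm (Fin d) := (finCongr hlen.symm).trans e with hπ
  obtain ⟨m, hm⟩ : ∃ m, m = lA.length := ⟨_, rfl⟩
  have hlenB : l.length = m + (3 + lB.length) := by
    simp only [hl, List.length_append, List.length_cons]
    omega
  -- index computations
  have idxW : ∀ u ∈ W, l.idxOf u = lA.idxOf u ∧ l.idxOf u < m := by
    intro u hu
    have h1 : l.idxOf u = lA.idxOf u := List.idxOf_append_of_mem ((hmemA u).2 hu)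
    refine ⟨h1, ?_⟩
    rw [h1, hm]
    exact List.idxOf_lt_length_iff.2 ((hmemA u).2 hu)
  have idxz : l.idxOf z = m := by
    rw [hl, List.idxOf_append_of_notMem (fun h => hzW ((hmemA z).1 h)),
      List.idxOf_cons_self]
    omega
  have idxy : l.idxOf y = m + 1 := by
    rw [hl, List.idxOf_append_of_notMem (fun h => hyW ((hmemA y).1 h)),
      List.idxOf_cons_ne _ (ne_of_lt hyz).symm, List.idxOf_cons_self]
    omega
  have idxx : l.idxOf x = m + 2 := by
    rw [hl, List.idxOf_append_of_notMem (fun h => hxW ((hmemA x).1 h)),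
      List.idxOf_cons_ne _ (ne_of_lt (hxy.trans hyz)).symm,
      List.idxOf_cons_ne _ (ne_of_lt hxy).symm, List.idxOf_cons_self]
    omega
  have idxU : ∀ u ∈ U, l.idxOf u = m + (3 + lB.idxOf u) := by
    intro u hu
    rw [hl, List.idxOf_append_of_notMem (fun h => hUW u hu ((hmemA u).1 h)),
      List.idxOf_cons_ne _ (fun h => hzU (by rw [h]; exact hu)),
      List.idxOf_cons_ne _ (fun h => hyU (by rw [h]; exact hu)),
      List.idxOf_cons_ne _ (fun h => hxU (by rw [h]; exact hu))]
    omega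
  -- membership in U is upward closed / forced
  have hvU : ∀ u v, (u = x ∨ u = y ∨ u = z ∨ u ∈ U) → r u v → v ∈ U := by
    intro u v hu huv
    simp only [hUdef, Finset.mem_filter, Finset.mem_univ, true_and]
    rcases hu with rfl | rfl | rfl | hu
    · exact Or.inl huv
    · exact Or.inr (Or.inl huv)
    · exact Or.inr (Or.inr huv)
    · simp only [hUdef, Finset.mem_filter, Finset.mem_univ, true_and] at hu
      rcases hu with h | h | h
      exacts [Or.inl (htrans _ _ _ h huv), Or.inr (Or.inl (htrans _ _ _ h huv)),
        Or.inr (Or.inr (htrans _ _ _ h huv))]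
  -- main index monotonicity
  have hmono : ∀ u v, r u v → l.idxOf u < l.idxOf v := by
    intro u v huv
    have hcls : ∀ w : Fin d, w ∈ W ∨ w = x ∨ w = y ∨ w = z ∨ w ∈ U := by
      intro w
      have := hmem w
      rw [hl, List.mem_append, List.mem_cons, List.mem_cons, List.mem_cons, hmemA, hmemB] at this
      tauto
    rcases hcls u with hu | hu
    · rcases hcls v with hv | hv
      · -- both in W
        obtain ⟨h1, _⟩ := idxW u hu
        obtain ⟨h2, _⟩ := idxW v hv
        rw [h1, h2]
        exact sorted_idxOf_lt (Finset.sortedLT_sort W) ((hmemA u).2 hu)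
          ((hmemA v).2 hv) (hcompat u v huv)
      · -- u in W, v later
        obtain ⟨_, h1⟩ := idxW u hu
        have h2 : m ≤ l.idxOf v := by
          rcases hv with rfl | rfl | rfl | hv
          · rw [idxx]; omega
          · rw [idxy]; omega
          · rw [idxz]
          · rw [idxU v hv]; omega
        omega
    · have hvU' : v ∈ U := hvU u v hu huv
      have h2 := idxU v hvU'
      rcases hu with rfl | rfl | rfl | hu
      · rw [idxx, h2]; omega
      · rw [idxy, h2]; omega
      · rw [idxz, h2]; omega
      · rw [idxU u hu, h2]
        have : lB.idxOf u < lB.idxOf v :=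
          sorted_idxOf_lt (Finset.sortedLT_sort U) ((hmemB u).2 hu)
            ((hmemB v).2 hvU') (hcompat u v huv)
        omega
  -- π is a linear extension
  have hπget : ∀ i : Fin d, π i = l.get ⟨(i : ℕ), by omega⟩ := fun i => rfl
  have hidxπ : ∀ i : Fin d, l.idxOf (π i) = (i : ℕ) := by
    intro i
    rw [hπget i]
    exact hnd.idxOf_getElem _ _
  have hlin : IsLinExt r π := by
    intro a b hab
    have := hmono (π a) (π b) hab
    rw [hidxπ a, hidxπ b] at this
    exact this
  -- descents
  have h0 : m < d := by omega
  have h1 : m + 1 < d := by omega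
  have h2 : m + 2 < d := by omega
  have hgeq : ∀ (i : Fin d) (u : Fin d), l.idxOf u = (i : ℕ) → π i = u := by
    intro i u hiu
    exact (List.idxOf_inj (hmem _)).1 ((hidxπ i).trans hiu.symm)
  obtain ⟨σ, hσlin, hσz, hσy, hσx⟩ :
      ∃ σ : Equiv.Perm (Fin d), IsLinExt r σ ∧ σ ⟨m, h0⟩ = z ∧
        σ ⟨m + 1, h1⟩ = y ∧ σ ⟨m + 2, h2⟩ = x :=
    ⟨π, hlin, hgeq _ _ idxz, hgeq _ _ idxy, hgeq _ _ idxx⟩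
  clear hgeq hπget hidxπ hlin hπ
  clear_value π
  clear π
  clear he
  clear_value e
  clear e hlen hnd hmem hndB
  clear hmono idxW idxz idxy idxx idxU hvU hlenB
    hmemA hmemB hUW hxU hyU hzU hxW hyW hzW hirr hixy hiyz hixz hm
    hl hlA hlB hUdef hWdef
  clear_value l lB lA W U
  clear l lB lA W U
  have hdesc : 1 < descents σ := by
    rw [descents, Finset.one_lt_card]
    refine ⟨⟨m, h0⟩, ?_, ⟨m + 1, h1⟩, ?_, ?_⟩
    · simp only [Finset.mem_filter, Finset.mem_univ, true_and]
      refine ⟨h1, ?_⟩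
      rw [hσz]
      have : σ ⟨(⟨m, h0⟩ : Fin d).1 + 1, h1⟩ = y := hσy
      rw [this]
      exact hyz
    · simp only [Finset.mem_filter, Finset.mem_univ, true_and]
      refine ⟨h2, ?_⟩
      rw [hσy]
      have : σ ⟨(⟨m + 1, h1⟩ : Fin d).1 + 1, h2⟩ = x := hσx
      rw [this]
      exact hxy
    · simp [Fin.ext_iff]
  exact absurd (hext σ hσlin) (by omega)
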